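/- Let φ: ℕ → ℝ be piecewise affine, determined by φ(0)=0, φ(k_j) = k_j log β_j for a strictly increasing sequence k_j with k_0 > 0 and reals β_j > 1 satisfying β_{j+1} ≥ β_j^{k_j}, extended affinely between consecutive k_j (and with slope log β_0 on [0,k_0]). Then the slopes d_j = (k_j log β_j − k_{j-1} log β_{j-1})/(k_j − k_{j-1}) satisfy log β_j ≤ d_j ≤ log β_{j+1}, so φ is convex, and k ↦ φ(k)/k is increasing. -/

import Mathlib

/-- Segment index of the interval `[m, m+1]` for the piecewise affine function. -/
def J16 (k : ℕ → ℕ) (m : ℕ) : ℕ :=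
  if k 0 ≤ m then Nat.findGreatest (fun j => k j ≤ m) m + 1 else 0

lemma J16_mono (k : ℕ → ℕ) : Monotone (J16 k) := by
  apply monotone_nat_of_le_succ
  intro m
  unfold J16
  by_cases h : k 0 ≤ m
  · rw [if_pos h, if_pos (h.trans (Nat.le_succ m))]
    have h2 := Nat.findGreatest_mono (P := fun j => k j ≤ m) (Q := fun j => k j ≤ m + 1)
      (fun j hj => hj.trans (Nat.le_succ m)) (by omega : m ≤ m + 1)
    exact Nat.add_le_add_right h2 1
  · rw [if_neg h]; exact Nat.zero_le _

/-- The piecewise affine function `φ` with `φ 0 = 0`, `φ (k j) = k j * log (β j)`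
for a strictly increasing sequence `k` and `β j > 1` with `β (j+1) ≥ β j ^ (k j)`,
has slopes `d j` with `log (β j) ≤ d j ≤ log (β (j+1))`; hence `d` is monotone,
`φ` is convex, and `m ↦ φ m / m` is increasing. -/
theorem stmt16 (k : ℕ → ℕ) (β : ℕ → ℝ) (d φ : ℕ → ℝ)
    (hk : StrictMono k) (hk0 : 0 < k 0)
    (hβ : ∀ j, 1 < β j) (hββ : ∀ j, β j ^ (k j) ≤ β (j + 1))
    (hd0 : d 0 = Real.log (β 0))
    (hd : ∀ j : ℕ, d (j + 1) =
      ((k (j + 1) : ℝ) * Real.log (β (j + 1)) - (k j : ℝ) * Real.log (β j)) /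
        ((k (j + 1) : ℝ) - (k j : ℝ)))
    (hφ0 : φ 0 = 0)
    (hφa : ∀ m : ℕ, m ≤ k 0 → φ m = d 0 * m)
    (hφb : ∀ j m : ℕ, k j ≤ m → m ≤ k (j + 1) →
      φ m = (k (j + 1) : ℝ) * Real.log (β (j + 1)) +
        d (j + 1) * ((m : ℝ) - (k (j + 1) : ℝ))) :
    (∀ j, Real.log (β j) ≤ d j) ∧ (∀ j, d j ≤ Real.log (β (j + 1))) ∧
    Monotone d ∧
    (∀ m : ℕ, 2 * φ (m + 1) ≤ φ m + φ (m + 2)) ∧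
    (∀ m : ℕ, 1 ≤ m → φ m / m ≤ φ (m + 1) / (m + 1)) := by
  have hkge : ∀ j, 1 ≤ k j := fun j => hk0.trans_le (hk.monotone (Nat.zero_le j))
  have hlogpos : ∀ j, 0 < Real.log (β j) := fun j => Real.log_pos (hβ j)
  have hlog : ∀ j, (k j : ℝ) * Real.log (β j) ≤ Real.log (β (j + 1)) := by
    intro j
    have h := Real.log_le_log (pow_pos (lt_trans one_pos (hβ j)) _) (hββ j)
    rwa [Real.log_pow] at h
  have hlogle : ∀ j, Real.log (β j) ≤ Real.log (β (j + 1)) := by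
    intro j
    calc Real.log (β j) ≤ (k j : ℝ) * Real.log (β j) :=
          le_mul_of_one_le_left (hlogpos j).le (by exact_mod_cast hkge j)
      _ ≤ _ := hlog j
  have hΔ : ∀ j, (0 : ℝ) < (k (j + 1) : ℝ) - (k j : ℝ) := by
    intro j
    have : k j < k (j + 1) := hk (Nat.lt_succ_self j)
    have : (k j : ℝ) < (k (j + 1) : ℝ) := by exact_mod_cast this
    linarith
  have hΔ1 : ∀ j, (1 : ℝ) ≤ (k (j + 1) : ℝ) - (k j : ℝ) := by
    intro j
    have : k j + 1 ≤ k (j + 1) := hk (Nat.lt_succ_self j)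
    have : ((k j : ℝ) + 1) ≤ (k (j + 1) : ℝ) := by exact_mod_cast this
    linarith
  have hkpos : ∀ j, (0 : ℝ) < (k j : ℝ) := fun j => by exact_mod_cast hkge j
  have hd1 : ∀ j, Real.log (β j) ≤ d j := by
    intro j
    cases j with
    | zero => rw [hd0]
    | succ j =>
      rw [hd j, le_div_iff₀ (hΔ j)]
      nlinarith [hlogle j, hkpos j, hlogpos j]
  have hd2 : ∀ j, d j ≤ Real.log (β (j + 1)) := by
    intro j
    cases j with
    | zero => rw [hd0]; exact hlogle 0
    | succ j =>
      rw [hd j, div_le_iff₀ (hΔ j)]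
      nlinarith [hlog (j + 1), hkpos j, hlogpos j, hlogpos (j + 2), hΔ1 j]
  have hmono : Monotone d := monotone_nat_of_le_succ fun j => (hd2 j).trans (hd1 (j + 1))
  -- slope of `φ` on `[m, m+1]` is `d (J16 k m)`
  have key : ∀ m, φ (m + 1) - φ m = d (J16 k m) := by
    intro m
    unfold J16
    by_cases h : k 0 ≤ m
    · rw [if_pos h]
      set j := Nat.findGreatest (fun j => k j ≤ m) m with hj
      have hjm : k j ≤ m := Nat.findGreatest_spec (P := fun j => k j ≤ m) (Nat.zero_le m) h
      have hjm1 : m + 1 ≤ k (j + 1) := by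
        by_contra hc
        push_neg at hc
        have hle : k (j + 1) ≤ m := by omega
        by_cases hx : j + 1 ≤ m
        · exact Nat.findGreatest_is_greatest (Nat.lt_succ_self j) hx hle
        · have : j + 1 ≤ k (j + 1) := hk.le_apply; omega
      rw [hφb j m hjm (by omega), hφb j (m + 1) (by omega) hjm1]
      push_cast
      ring
    · rw [if_neg h]
      push_neg at h
      rw [hφa m (by omega), hφa (m + 1) (by omega)]
      push_cast
      ring
  have smono : ∀ {a b : ℕ}, a ≤ b → φ (a + 1) - φ a ≤ φ (b + 1) - φ b := by
    intro a b hab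
    rw [key a, key b]
    exact hmono (J16_mono k hab)
  refine ⟨hd1, hd2, hmono, ?_, ?_⟩
  · intro m
    have := smono (Nat.le_succ m)
    linarith
  · intro m hm
    have hsum : φ m = ∑ i ∈ Finset.range m, (φ (i + 1) - φ i) := by
      rw [Finset.sum_range_sub, hφ0, sub_zero]
    have hle : φ m ≤ (m : ℝ) * (φ (m + 1) - φ m) := by
      calc φ m = ∑ i ∈ Finset.range m, (φ (i + 1) - φ i) := hsum
        _
          ≤ ∑ _i ∈ Finset.range m, (φ (m + 1) - φ m) :=
            Finset.sum_le_sum fun i hi => smono (Finset.mem_range.mp hi).le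
        _ = (m : ℝ) * (φ (m + 1) - φ m) := by
            rw [Finset.sum_const, Finset.card_range, nsmul_eq_mul]
    have hmpos : (0 : ℝ) < m := by exact_mod_cast hm
    rw [div_le_div_iff₀ hmpos (by positivity)]
    push_cast
    nlinarith
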